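/- Let d ≥ 3 and let C₁, …, Cₙ ⊆ ℝ^d be closed convex cones. If the Minkowski sum C₁ + ⋯ + Cₙ is not a closed set, then there exist an index i ∈ {1, …, n} and a nonzero vector x ∈ ℝ^d such that the open ray {t·x : t > 0} is contained in Cᵢ and the opposite open ray {−t·x : t > 0} is contained in the Minkowski sum C₁ + ⋯ + C_{i−1} + C_{i+1} + ⋯ + Cₙ of the remaining cones. -/

import Mathlib

open Set Pointwise

noncomputable section

/-- The set of real numbers that are integers (the ring ℤ viewed inside ℝ). -/
def ZSet : Set ℝ := Set.range (fun z : ℤ => (z : ℝ))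

/-- `T : ℝ^d → ℝ^d` is an affine `A`-unimodular transformation: `T x = M x + b` with
`M` an integer matrix of determinant `±1` and `b ∈ A^d`. -/
def IsUnimodularMap {d : ℕ} (A : Set ℝ) (T : (Fin d → ℝ) → (Fin d → ℝ)) : Prop :=
  ∃ (M : Matrix (Fin d) (Fin d) ℤ) (b : Fin d → ℝ),
    (M.det = 1 ∨ M.det = -1) ∧ (∀ i, b i ∈ A) ∧
    ∀ x, T x = (M.map (fun z : ℤ => (z : ℝ))).mulVec x + b

/-- `Y` is an `A`-unimodular copy of `X`. -/
def IsUnimodCopy {d : ℕ} (A : Set ℝ) (X Y : Set (Fin d → ℝ)) : Prop :=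
  ∃ T, IsUnimodularMap A T ∧ Y = T '' X

/-- `K` contains an `A`-unimodular copy of `X`. -/
def ContainsCopy {d : ℕ} (A : Set ℝ) (X K : Set (Fin d → ℝ)) : Prop :=
  ∃ Y, IsUnimodCopy A X Y ∧ Y ⊆ K

/-- `K` is `A`-`X`-free: its relative interior contains no `A`-unimodular copy of `X`. -/
def IsFree {d : ℕ} (A : Set ℝ) (X K : Set (Fin d → ℝ)) : Prop :=
  ∀ Y, IsUnimodCopy A X Y → ¬ Y ⊆ intrinsicInterior ℝ K

/-- A convex body: a nonempty compact convex set. -/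
def IsConvexBody {d : ℕ} (K : Set (Fin d → ℝ)) : Prop :=
  Convex ℝ K ∧ IsCompact K ∧ K.Nonempty

/-- A polytope: the convex hull of a finite set of points. -/
def IsPolytope {d : ℕ} (K : Set (Fin d → ℝ)) : Prop :=
  ∃ F : Set (Fin d → ℝ), F.Finite ∧ K = convexHull ℝ F

/-- The width of `K` along the integer linear functional `u`. -/
def widthAlong {d : ℕ} (u : Fin d → ℤ) (K : Set (Fin d → ℝ)) : ℝ :=
  sSup {w | ∃ x ∈ K, ∃ y ∈ K, w = |(∑ i, (u i : ℝ) * x i) - ∑ i, (u i : ℝ) * y i|}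

/-- The lattice width of `K`: the infimum of its widths along nonzero integer functionals. -/
def latticeWidth {d : ℕ} (K : Set (Fin d → ℝ)) : ℝ :=
  sInf {w | ∃ u : Fin d → ℤ, u ≠ 0 ∧ w = widthAlong u K}

/-- The generalised flatness constant `Flt_d^A(X)`: the supremum of the lattice widths of all
convex bodies containing no `A`-unimodular copy of `X`. -/
def Flt (d : ℕ) (A : Set ℝ) (X : Set (Fin d → ℝ)) : ℝ :=
  sSup {w | ∃ K : Set (Fin d → ℝ), IsConvexBody K ∧ ¬ ContainsCopy A X K ∧ w = latticeWidth K}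

/-- The affine dimension of a set: the dimension of the direction of its affine span. -/
def affDim {d : ℕ} (s : Set (Fin d → ℝ)) : ℕ :=
  Module.finrank ℝ (affineSpan ℝ s).direction

/-- Minkowski difference `K ÷ S = {x | S + x ⊆ K}`. -/
def mDiff {d : ℕ} (K S : Set (Fin d → ℝ)) : Set (Fin d → ℝ) :=
  {x | ∀ s ∈ S, s + x ∈ K}

/-- The standard triangle `Δ₂ = conv{(0,0), (1,0), (0,1)} ⊆ ℝ²`. -/
def stdSimplex2 : Set (Fin 2 → ℝ) := convexHull ℝ {![0, 0], ![1, 0], ![0, 1]}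

/-- The Minkowski sum of the cones `C j` for `j ∈ s`. -/
def conesSum {d n : ℕ} (C : Fin n → Set (Fin d → ℝ)) (s : Finset (Fin n)) :
    Set (Fin d → ℝ) :=
  {y | ∃ f : Fin n → (Fin d → ℝ), (∀ j ∈ s, f j ∈ C j) ∧ y = ∑ j ∈ s, f j}

open Filter Topology in
lemma closed_image_of_cone {E F : Type*} [NormedAddCommGroup E] [NormedSpace ℝ E]
    [NormedAddCommGroup F] [NormedSpace ℝ F] [FiniteDimensional ℝ E]
    (S : E →L[ℝ] F) (K : Set E) (hK : IsClosed K)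
    (hcone : ∀ f ∈ K, ∀ t : ℝ, 0 < t → t • f ∈ K)
    (hker : ∀ f ∈ K, S f = 0 → f = 0) :
    IsClosed (S '' K) := by
  obtain ⟨c, hc, hbound⟩ : ∃ c : ℝ, 0 < c ∧ ∀ f ∈ K, c * ‖f‖ ≤ ‖S f‖ := by
    by_cases hA : (K ∩ Metric.sphere 0 1).Nonempty
    · have hcomp : IsCompact (K ∩ Metric.sphere 0 1) :=
        (isCompact_sphere 0 1).inter_left hK
      obtain ⟨x₀, hx₀, hmin⟩ := hcomp.exists_isMinOn hA
        (S.continuous.norm.continuousOn)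
      refine ⟨‖S x₀‖, ?_, ?_⟩
      · have hx0ne : S x₀ ≠ 0 := by
          intro h
          have h0 : x₀ = 0 := hker x₀ hx₀.1 h
          have := hx₀.2
          rw [h0, mem_sphere_zero_iff_norm] at this
          simp at this
        exact norm_pos_iff.mpr hx0ne
      · intro f hf
        rcases eq_or_ne f 0 with rfl | hf0
        · simp
        · have hn : (0:ℝ) < ‖f‖⁻¹ := inv_pos.mpr (norm_pos_iff.mpr hf0)
          have h1 : ‖f‖⁻¹ • f ∈ K ∩ Metric.sphere 0 1 :=
            ⟨hcone f hf _ hn, by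
              rw [mem_sphere_zero_iff_norm]
              exact norm_smul_inv_norm hf0⟩
          have h2 : ‖S x₀‖ ≤ ‖S (‖f‖⁻¹ • f)‖ := hmin h1
          rw [map_smul, norm_smul, norm_inv, norm_norm] at h2
          have hfpos : (0:ℝ) < ‖f‖ := norm_pos_iff.mpr hf0
          calc ‖S x₀‖ * ‖f‖ ≤ (‖f‖⁻¹ * ‖S f‖) * ‖f‖ := by nlinarith
            _ = ‖S f‖ := by field_simp
    · refine ⟨1, one_pos, fun f hf => ?_⟩
      rcases eq_or_ne f 0 with rfl | hf0
      · simp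
      · exact absurd ⟨hcone f hf _ (inv_pos.mpr (norm_pos_iff.mpr hf0)),
          by rw [mem_sphere_zero_iff_norm]; exact norm_smul_inv_norm hf0⟩
          (fun h => hA ⟨_, h⟩)
  apply IsSeqClosed.isClosed
  intro u y hu huy
  simp only [Set.mem_image] at hu
  choose g hgK hgS using hu
  obtain ⟨R, hR⟩ : ∃ R : ℝ, ∀ k, ‖u k‖ ≤ R := by
    have := (huy.norm).bddAbove_range
    obtain ⟨R, hR⟩ := this
    exact ⟨R, fun k => hR ⟨k, rfl⟩⟩
  have hgb : ∀ k, g k ∈ K ∩ Metric.closedBall 0 (R / c) := by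
    intro k
    refine ⟨hgK k, ?_⟩
    rw [Metric.mem_closedBall, dist_zero_right]
    rw [le_div_iff₀ hc, mul_comm]
    calc c * ‖g k‖ ≤ ‖S (g k)‖ := hbound _ (hgK k)
      _ = ‖u k‖ := by rw [hgS]
      _ ≤ R := hR k
  have hcomp : IsCompact (K ∩ Metric.closedBall 0 (R / c)) :=
    (isCompact_closedBall 0 (R / c)).inter_left hK
  obtain ⟨a, ha, φ, hφ, hconv⟩ := hcomp.tendsto_subseq hgb
  refine ⟨a, ha.1, ?_⟩
  have h1 : Tendsto (fun k => S (g (φ k))) atTop (𝓝 (S a)) :=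
    (S.continuous.tendsto a).comp hconv
  have h2 : Tendsto (fun k => S (g (φ k))) atTop (𝓝 y) := by
    simpa [hgS, Function.comp_def] using huy.comp hφ.tendsto_atTop
  exact tendsto_nhds_unique h1 h2

/-- If the Minkowski sum of closed convex cones `C₁, …, Cₙ ⊆ ℝ^d` (`d ≥ 3`) is not closed,
then some `Cᵢ` contains an open ray whose opposite ray is contained in the sum of the
remaining cones. -/
theorem not_closed_sum_cones_exists_line (d n : ℕ) (hd : 3 ≤ d)
    (C : Fin n → Set (Fin d → ℝ))
    (hconv : ∀ i, Convex ℝ (C i)) (hclosed : ∀ i, IsClosed (C i))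
    (hzero : ∀ i, (0 : Fin d → ℝ) ∈ C i)
    (hcone : ∀ i, ∀ x ∈ C i, ∀ t : ℝ, 0 < t → t • x ∈ C i)
    (hnc : ¬ IsClosed (conesSum C Finset.univ)) :
    ∃ (i : Fin n) (x : Fin d → ℝ), x ≠ 0 ∧
      (∀ t : ℝ, 0 < t → t • x ∈ C i) ∧
      (∀ t : ℝ, 0 < t → -(t • x) ∈ conesSum C (Finset.univ.erase i)) := by
  by_contra hcon
  push_neg at hcon
  apply hnc
  -- positive independence
  have hind : ∀ f : Fin n → (Fin d → ℝ), (∀ i, f i ∈ C i) → (∑ i, f i) = 0 →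
      ∀ i, f i = 0 := by
    intro f hf hsum i
    by_contra hfi
    obtain ⟨t, ht, hnot⟩ := hcon i (f i) hfi (fun t ht => hcone i (f i) (hf i) t ht)
    apply hnot
    refine ⟨fun j => t • f j, fun j _ => hcone j (f j) (hf j) t ht, ?_⟩
    have h1 : ∑ j ∈ Finset.univ.erase i, f j = -(f i) := by
      rw [Finset.sum_erase_eq_sub (Finset.mem_univ i), hsum, zero_sub]
    calc -(t • f i) = t • ∑ j ∈ Finset.univ.erase i, f j := by
          rw [h1, smul_neg]
      _ = ∑ j ∈ Finset.univ.erase i, t • f j := Finset.smul_sum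
  -- express as linear image of closed cone
  set S : ((Fin n → Fin d → ℝ)) →L[ℝ] (Fin d → ℝ) :=
    ∑ i : Fin n, ContinuousLinearMap.proj i with hS
  have hSapp : ∀ f : Fin n → Fin d → ℝ, S f = ∑ i, f i := by
    intro f
    simp [hS, ContinuousLinearMap.sum_apply]
  have himg : conesSum C Finset.univ = S '' (Set.univ.pi C) := by
    ext y
    constructor
    · rintro ⟨f, hf, rfl⟩
      exact ⟨f, fun j _ => hf j (Finset.mem_univ j), hSapp f⟩
    · rintro ⟨f, hf, rfl⟩
      exact ⟨f, fun j _ => hf j (Set.mem_univ j), hSapp f⟩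
  rw [himg]
  apply closed_image_of_cone
  · exact isClosed_set_pi (fun i _ => hclosed i)
  · intro f hf t ht i _
    exact hcone i (f i) (hf i (Set.mem_univ i)) t ht
  · intro f hf hSf
    funext i
    exact hind f (fun i => hf i (Set.mem_univ i)) (by rw [← hSapp]; exact hSf) i
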